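/- Let G be a finite simple graph, let f be a γ_R-function on G, and let V_2 = {v ∈ V(G) : f(v) = 2}. Then every vertex v ∈ V_2 has at least two private neighbours with respect to V_2. -/
import Mathlib


open SimpleGraph

/-- The closed neighbourhood `N[v]` of a vertex `v`: `v` together with its neighbours. -/
def closedNbhd {V : Type*} (G : SimpleGraph V) (v : V) : Set V :=
  insert v (G.neighborSet v)

/-- A Roman dominating function on `G`: a map into `{0,1,2}` such that every vertex with
value `0` has a neighbour with value `2`. -/
def IsRomanDominating {V : Type*} (G : SimpleGraph V) (f : V → ℕ) : Prop :=
  (∀ v, f v ≤ 2) ∧ ∀ v, f v = 0 → ∃ u, G.Adj v u ∧ f u = 2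

/-- The Roman domination number `γ_R(G)`: the minimum weight of a Roman dominating
function on `G`. -/
noncomputable def romanNumber {V : Type*} [Fintype V] (G : SimpleGraph V) : ℕ :=
  sInf {w | ∃ f : V → ℕ, IsRomanDominating G f ∧ ∑ v, f v = w}

/-- A two-neighbour packing of `G`: a set of vertices such that every closed
neighbourhood contains at most two of its members. -/
def IsTwoNbrPacking {V : Type*} (G : SimpleGraph V) (A : Set V) : Prop :=
  ∀ v, (closedNbhd G v ∩ A).ncard ≤ 2

/-- The two-neighbour packing number `γ̄_R(G)`: the maximum size of a two-neighbour
packing of `G`. -/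
noncomputable def tnpNumber {V : Type*} [Fintype V] (G : SimpleGraph V) : ℕ :=
  sSup {n | ∃ A : Set V, IsTwoNbrPacking G A ∧ A.ncard = n}

/-- `u` is a private neighbour of `v` with respect to `V₂`: `u ∈ N[v]` but `u ∉ N[v']`
for every `v' ∈ V₂ \ {v}`. -/
def IsPrivateNbr {V : Type*} (G : SimpleGraph V) (V₂ : Set V) (u v : V) : Prop :=
  u ∈ closedNbhd G v ∧ ∀ v' ∈ V₂, v' ≠ v → u ∉ closedNbhd G v'

theorem V2_two_private_neighbours {V : Type*} [Fintype V] (G : SimpleGraph V)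
    (f : V → ℕ) (hf : IsRomanDominating G f) (hmin : ∑ v, f v = romanNumber G) :
    ∀ v : V, f v = 2 →
      2 ≤ {u : V | IsPrivateNbr G {w : V | f w = 2} u v}.ncard := by
  classical
  intro v hv
  by_contra hlt
  push_neg at hlt
  set V₂ : Set V := {w : V | f w = 2} with hV₂
  set P : Set V := {u : V | IsPrivateNbr G V₂ u v} with hPdef
  have hlt1 : P.ncard ≤ 1 := Nat.lt_succ_iff.mp hlt
  have hPss : ∀ a ∈ P, ∀ b ∈ P, a = b := (Set.ncard_le_one (Set.toFinite P)).mp hlt1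
  -- the modified function
  set g : V → ℕ := fun w => if w = v then (if v ∈ P then 1 else 0)
    else if f w = 0 ∧ w ∈ P then 1 else f w with hgdef
  have hgv : g v = if v ∈ P then 1 else 0 := by simp [hgdef]
  have hgne : ∀ w, w ≠ v → g w = if f w = 0 ∧ w ∈ P then 1 else f w := by
    intro w hw; simp [hgdef, hw]
  have hg2 : ∀ w, w ≠ v → f w = 2 → g w = 2 := by
    intro w hw hfw
    rw [hgne w hw, if_neg]
    · exact hfw
    · rintro ⟨h0, -⟩; omega
  have hvmemcn : ∀ w, w ∈ closedNbhd G w := fun w => Set.mem_insert _ _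
  -- g is Roman dominating
  have hgRDF : IsRomanDominating G g := by
    constructor
    · intro w
      by_cases hw : w = v
      · subst hw; rw [hgv]; split <;> omega
      · rw [hgne w hw]; split
        · omega
        · exact hf.1 w
    · intro w hw0
      by_cases hw : w = v
      · rw [hw] at hw0 ⊢
        rw [hgv] at hw0
        have hvP : v ∉ P := by intro h; simp [h] at hw0
        have : ¬ IsPrivateNbr G V₂ v v := hvP
        rw [IsPrivateNbr] at this
        push_neg at this
        obtain ⟨v', hv'2, hne, hmem⟩ := this (hvmemcn v)
        have hadj : G.Adj v' v := by
          rcases hmem with h | h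
          · exact absurd h.symm hne
          · exact h
        exact ⟨v', hadj.symm, hg2 v' hne hv'2⟩
      · rw [hgne w hw] at hw0
        have hfw0 : f w = 0 := by
          by_contra h
          rw [if_neg (fun hc => h hc.1)] at hw0; exact h hw0
        have hwP : w ∉ P := by
          intro h; rw [if_pos ⟨hfw0, h⟩] at hw0; omega
        obtain ⟨x, hadj, hx2⟩ := hf.2 w hfw0
        by_cases hxv : x = v
        · rw [hxv] at hadj
          have : ¬ IsPrivateNbr G V₂ w v := hwP
          rw [IsPrivateNbr] at this
          push_neg at this
          have hwcn : w ∈ closedNbhd G v := Set.mem_insert_of_mem _ hadj.symm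
          obtain ⟨v', hv'2, hne, hmem⟩ := this hwcn
          have hwne : w ≠ v' := by intro h; subst h; have h2 : f w = 2 := hv'2; omega
          have hadj' : G.Adj w v' := by
            rcases hmem with h | h
            · exact absurd h hwne
            · exact (G.adj_symm h)
          exact ⟨v', hadj', hg2 v' hne hv'2⟩
        · exact ⟨x, hadj, hg2 x hxv hx2⟩
  -- the weight decreases
  have hsum : ∑ w, g w < ∑ w, f w := by
    by_cases hcase : ∃ u ∈ P, u ≠ v
    · obtain ⟨u, huP, huv⟩ := hcase
      have hvP : v ∉ P := fun h => huv (hPss u huP v h)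
      have hgv0 : g v = 0 := by rw [hgv, if_neg hvP]
      have hgu : g u ≤ f u + 1 := by
        rw [hgne u huv]; split <;> omega
      have huev : u ∈ Finset.univ.erase v := Finset.mem_erase.mpr ⟨huv, Finset.mem_univ u⟩
      have h1g := Finset.sum_erase_add Finset.univ g (Finset.mem_univ v)
      have h2g := Finset.sum_erase_add (Finset.univ.erase v) g huev
      have h1f := Finset.sum_erase_add Finset.univ f (Finset.mem_univ v)
      have h2f := Finset.sum_erase_add (Finset.univ.erase v) f huev
      have hsame : ∑ w ∈ (Finset.univ.erase v).erase u, g w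
          = ∑ w ∈ (Finset.univ.erase v).erase u, f w := by
        apply Finset.sum_congr rfl
        intro w hwmem
        obtain ⟨hwu, hwv⟩ := by
          simpa [Finset.mem_erase] using hwmem
        rw [hgne w hwv, if_neg]
        rintro ⟨-, hwP⟩
        exact hwu (hPss w hwP u huP)
      omega
    · push_neg at hcase
      apply Finset.sum_lt_sum
      · intro w _
        by_cases hwv : w = v
        · subst hwv; rw [hgv, hv]; split <;> omega
        · rw [hgne w hwv, if_neg]
          rintro ⟨-, hwP⟩
          exact hwv (hcase w hwP)
      · refine ⟨v, Finset.mem_univ v, ?_⟩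
        rw [hgv, hv]; split <;> omega
  -- contradiction with minimality
  have hle : romanNumber G ≤ ∑ w, g w := Nat.sInf_le ⟨g, hgRDF, rfl⟩
  omega
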